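/- Let φ̌ be a Schwartz function, let a > 0, and for an integer p₀ define φ_{p₀}-convolution by (g * φ̌_{p₀})(x) := ∫_ℝ g(x - a y) φ̌(y) e^{i p₀ y} dy. Then for any g ∈ L^∞(ℝ), any x ∈ ℝ and any m ∈ ℕ, Σ_{p₀=2^m}^{2^{m+1}} |(g * φ̌_{p₀})(x)|² ≲ ‖g‖_∞², with implied constant depending only on φ̌. -/

import Mathlib

open MeasureTheory Real Complex
open scoped ENNReal

/-- The modulated projection `(g * φ̌_{p₀})(x) = ∫ g(x - a y) φ̌(y) e^{i p₀ y} dy`. -/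
noncomputable def modProj (φc : ℝ → ℂ) (a : ℝ) (p₀ : ℕ) (g : ℝ → ℂ) (x : ℝ) : ℂ :=
  ∫ y : ℝ, g (x - a * y) * φc y * Complex.exp (Complex.I * (p₀ : ℝ) * y)

private lemma aux_sq_ineq (u r : ℝ) : 1 + r^2 ≤ 4*(1+u^2)*(1+(2*π*(u+r))^2) := by
  have h1 : 1 + r^2 ≤ 4*(1+u^2)*(1+36*(u+r)^2) := by
    nlinarith [sq_nonneg (r+2*u), sq_nonneg u, sq_nonneg (u+r),
      mul_nonneg (sq_nonneg u) (sq_nonneg (u+r))]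
  refine h1.trans ?_
  have h9 : (36:ℝ) ≤ 4*π^2 := by nlinarith [Real.pi_gt_three]
  have h36 : (0:ℝ) ≤ (4*π^2 - 36) * (u+r)^2 := mul_nonneg (by linarith) (sq_nonneg _)
  nlinarith [mul_le_mul_of_nonneg_left h36 (by positivity : (0:ℝ) ≤ 4*(1+u^2))]

private lemma aux_summable : Summable (fun k : ℤ => (1:ℝ) / (1 + (k:ℝ)^2)) := by
  refine Summable.of_norm_bounded_eventually (g := fun k : ℤ => 1 / (k:ℝ)^2)
    (summable_one_div_int_pow.mpr one_lt_two) ?_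
  filter_upwards [Filter.eventually_cofinite_ne (0:ℤ)] with k hk
  have h0 : (1:ℝ) ≤ |(k:ℝ)| := by exact_mod_cast Int.one_le_abs hk
  have h1 : (1:ℝ) ≤ (k:ℝ)^2 := by nlinarith [_root_.sq_abs (k:ℝ), h0]
  rw [Real.norm_of_nonneg (by positivity)]
  exact one_div_le_one_div_of_le (by linarith) (by linarith)

/-- Pointwise Bessel inequality against an `L^∞` function:
`Σ_{p₀=2^m}^{2^{m+1}} |(g * φ̌_{p₀})(x)|² ≲ ‖g‖_∞²` with constant depending only
on the Schwartz function `φ̌`. -/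
theorem bessel_modulated_projections_Linfty (φc : SchwartzMap ℝ ℂ) :
    ∃ C : ℝ, 0 < C ∧
      ∀ (a : ℝ), 0 < a → ∀ (g : ℝ → ℂ) (B : ℝ), Measurable g → (∀ y, ‖g y‖ ≤ B) →
        ∀ (x : ℝ) (m : ℕ),
          ∑ p₀ ∈ Finset.Icc (2 ^ m) (2 ^ (m + 1)),
              ‖modProj (φc : ℝ → ℂ) a p₀ g x‖ ^ 2 ≤ C * B ^ 2 := by
  haveI : Fact ((0:ℝ) < 1) := ⟨one_pos⟩
  obtain ⟨C0, hC0pos, hC0⟩ := φc.decay 0 0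
  obtain ⟨C2, hC2pos, hC2⟩ := φc.decay 2 0
  set d : ℝ := C0 + C2 with hdDef
  have hd : ∀ t : ℝ, (1 + t^2) * ‖φc t‖ ≤ d := by
    intro t
    have a0 := hC0 t
    have a2 := hC2 t
    simp only [pow_zero, one_mul, norm_iteratedFDeriv_zero] at a0 a2
    have ht : ‖t‖^2 = t^2 := by rw [Real.norm_eq_abs, _root_.sq_abs]
    rw [ht] at a2
    nlinarith [norm_nonneg (φc t), sq_nonneg t]
  have hd0 : 0 ≤ d := le_trans (by positivity : (0:ℝ) ≤ (1+(0:ℝ)^2) * ‖φc 0‖) (hd 0)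
  set S : ℝ := ∑' k:ℤ, (1:ℝ)/(1+(k:ℝ)^2) with hSdef
  have hS0 : 0 ≤ S := tsum_nonneg (fun k => by positivity)
  set M : ℝ := 8*d*S with hMdef
  have hM0 : 0 ≤ M := by positivity
  refine ⟨(2*π)^2 * M^2 + 1, by positivity, ?_⟩
  intro a ha g B hgm hB x m
  have hB0 : 0 ≤ B := (norm_nonneg _).trans (hB 0)
  set h : ℝ → ℂ := fun u => g (x - a*(2*π*u)) * φc (2*π*u) with hhdef
  have hhm : Measurable h := by
    apply Measurable.mul
    · exact hgm.comp (by fun_prop)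
    · exact (φc.continuous.measurable).comp (by fun_prop)
  have hhb : ∀ u, ‖h u‖ ≤ B * ‖φc (2*π*u)‖ := by
    intro u
    rw [hhdef]
    simp only [norm_mul]
    exact mul_le_mul_of_nonneg_right (hB _) (norm_nonneg _)
  have hφint : Integrable (fun u:ℝ => φc (2*π*u)) :=
    φc.integrable.comp_mul_left' (by positivity)
  have hhint : Integrable h :=
    ((hφint.norm).const_mul B).mono' hhm.aestronglyMeasurable (ae_of_all _ hhb)
  -- decay estimates for shifted Schwartz values
  have hφb : ∀ (u:ℝ) (k:ℤ), ‖φc (2*π*(u+(k:ℝ)))‖ ≤ (4*(1+u^2)*d) * (1/(1+(k:ℝ)^2)) := by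
    intro u k
    have hpos : (0:ℝ) < 1+(k:ℝ)^2 := by positivity
    have h1 := hd (2*π*(u+(k:ℝ)))
    have h2 := aux_sq_ineq u (k:ℝ)
    rw [mul_one_div, le_div_iff₀ hpos]
    nlinarith [norm_nonneg (φc (2*π*(u+(k:ℝ)))),
      mul_le_mul_of_nonneg_left h2 (norm_nonneg (φc (2*π*(u+(k:ℝ))))),
      mul_le_mul_of_nonneg_left h1 (by positivity : (0:ℝ) ≤ 4*(1+u^2))]
  have hhb2 : ∀ (u:ℝ) (k:ℤ), ‖h (u+(k:ℝ))‖ ≤ (B*(4*(1+u^2)*d)) * (1/(1+(k:ℝ)^2)) := by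
    intro u k
    calc ‖h (u+(k:ℝ))‖ ≤ B * ‖φc (2*π*(u+(k:ℝ)))‖ := hhb _
      _ ≤ B * ((4*(1+u^2)*d) * (1/(1+(k:ℝ)^2))) := mul_le_mul_of_nonneg_left (hφb u k) hB0
      _ = _ := by ring
  have hsum_norm : ∀ u:ℝ, Summable fun k:ℤ => ‖h (u+(k:ℝ))‖ := by
    intro u
    apply Summable.of_norm_bounded (aux_summable.mul_left (B*(4*(1+u^2)*d)))
    intro k
    rw [norm_norm]
    exact hhb2 u k
  have hsum_h : ∀ u:ℝ, Summable fun k:ℤ => h (u+(k:ℝ)) := fun u => (hsum_norm u).of_norm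
  set Hr : ℝ → ℂ := fun u => ∑' k:ℤ, h (u+(k:ℝ)) with hHrdef
  have hHrm : Measurable Hr := by
    have hm1 : ∀ s : Finset ℤ, Measurable (fun u:ℝ => ∑ k ∈ s, h (u + (k:ℝ))) :=
      fun s => Finset.measurable_sum _ (fun k _ => hhm.comp (measurable_add_const _))
    have hm2 : Filter.Tendsto (fun (s : Finset ℤ) (u:ℝ) => ∑ k ∈ s, h (u+(k:ℝ)))
        Filter.atTop (nhds Hr) := by
      rw [tendsto_pi_nhds]
      intro u
      exact (hsum_h u).hasSum
    exact measurable_of_tendsto_metrizable' Filter.atTop hm1 hm2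
  have hHrb : ∀ u ∈ Set.Ioc (0:ℝ) 1, ‖Hr u‖ ≤ B * M := by
    intro u hu
    have hb3 : ∀ k:ℤ, ‖h (u+(k:ℝ))‖ ≤ (B*(8*d)) * (1/(1+(k:ℝ)^2)) := by
      intro k
      refine (hhb2 u k).trans ?_
      have hu2 : 4*(1+u^2) ≤ 8 := by nlinarith [hu.1, hu.2]
      have hq : (0:ℝ) ≤ 1/(1+(k:ℝ)^2) := by positivity
      nlinarith [mul_nonneg (mul_nonneg hB0 hd0) hq]
    calc ‖Hr u‖ ≤ ∑' k:ℤ, ‖h (u+(k:ℝ))‖ := norm_tsum_le_tsum_norm (hsum_norm u)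
      _ ≤ ∑' k:ℤ, (B*(8*d)) * (1/(1+(k:ℝ)^2)) :=
          Summable.tsum_le_tsum hb3 (hsum_norm u) (aux_summable.mul_left _)
      _ = (B*(8*d)) * S := by rw [hSdef]; exact tsum_mul_left
      _ = B * M := by rw [hMdef]; ring
  set F : AddCircle (1:ℝ) → ℂ := AddCircle.liftIoc 1 0 Hr with hFdef
  have hFeq : ∀ u:ℝ, u ∈ Set.Ioc (0:ℝ) (0+1) → F (u : AddCircle (1:ℝ)) = Hr u := by
    intro u hu
    exact AddCircle.liftIoc_coe_apply hu
  have hFm : Measurable F := by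
    rw [hFdef]
    exact (hHrm.comp measurable_subtype_coe).comp (AddCircle.measurableEquivIoc 1 0).measurable
  have hFb : ∀ t, ‖F t‖ ≤ B * M := by
    intro t
    have hmem : ((AddCircle.equivIoc 1 0 t) : ℝ) ∈ Set.Ioc (0:ℝ) 1 := by
      simpa using (AddCircle.equivIoc 1 0 t).2
    have hFt : F t = Hr ((AddCircle.equivIoc 1 0 t) : ℝ) := rfl
    exact le_trans (le_of_eq (congrArg norm hFt)) (hHrb _ hmem)
  have hFmem : MemLp F 2 (AddCircle.haarAddCircle) :=
    MemLp.of_bound hFm.aestronglyMeasurable (B*M) (ae_of_all _ hFb)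
  set fL := hFmem.toLp F with hfLdef
  have hcoeq : ∀ n:ℤ, fourierCoeff (⇑fL) n = fourierCoeff F n := by
    intro n
    simp only [fourierCoeff]
    apply integral_congr_ae
    filter_upwards [hFmem.coeFn_toLp] with t ht
    rw [ht]
  have hpars := tsum_sq_fourierCoeff fL
  have hsummable : Summable fun n:ℤ => ‖fourierCoeff (⇑fL) n‖^2 := by
    have hx := lp.memℓp (fourierBasis.repr fL)
    rw [memℓp_gen_iff (by norm_num : (0:ℝ) < (2:ℝ≥0∞).toReal)] at hx
    refine hx.congr fun n => ?_
    rw [fourierBasis_repr]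
    rw [show ((2:ℝ≥0∞).toReal) = ((2:ℕ):ℝ) by norm_num, Real.rpow_natCast]
  have hintb : ∫ t, ‖fL t‖^2 ∂(AddCircle.haarAddCircle) ≤ (B*M)^2 := by
    have hae : ∀ᵐ t ∂(AddCircle.haarAddCircle (T := 1)), ‖fL t‖ ≤ B*M := by
      filter_upwards [hFmem.coeFn_toLp] with t ht
      rw [ht]; exact hFb t
    have h2 : ∀ᵐ t ∂(AddCircle.haarAddCircle (T := 1)), ‖‖fL t‖^2‖ ≤ (B*M)^2 := by
      filter_upwards [hae] with t ht
      rw [Real.norm_of_nonneg (by positivity)]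
      exact pow_le_pow_left₀ (norm_nonneg _) ht 2
    have h3 := norm_integral_le_of_norm_le_const h2
    rw [probReal_univ, mul_one] at h3
    exact (Real.le_norm_self _).trans h3
  -- the key identity
  have hkey : ∀ p : ℕ,
      modProj (φc : ℝ → ℂ) a p g x = (2*π) • fourierCoeff F (-(p:ℤ)) := by
    intro p
    set E : ℝ → ℂ := fun u => Complex.exp (((2*π*(p:ℝ)*u : ℝ) : ℂ) * Complex.I) with hEdef
    have hEnorm : ∀ u:ℝ, ‖E u‖ = 1 := by
      intro u
      rw [hEdef]
      rw [Complex.norm_exp_ofReal_mul_I]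
    have hEper : ∀ (k : ℤ) (u : ℝ), E (u + (k:ℝ)) = E u := by
      intro k u
      rw [hEdef]
      simp only []
      have harg : ((2*π*(p:ℝ)*(u+(k:ℝ)) : ℝ) : ℂ) * Complex.I
          = ((2*π*(p:ℝ)*u : ℝ):ℂ) * Complex.I + (((p:ℤ)*k : ℤ) : ℂ) * (2*π*Complex.I) := by
        push_cast; ring
      rw [harg, Complex.exp_add, Complex.exp_int_mul_two_pi_mul_I, mul_one]
    have hEm : Measurable E := by
      apply Complex.continuous_exp.measurable.comp
      fun_prop
    have hEh_int : Integrable (fun u => E u * h u) := by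
      refine ((hφint.norm).const_mul B).mono'
        ((hEm.mul hhm).aestronglyMeasurable) (ae_of_all _ ?_)
      intro u
      rw [norm_mul, hEnorm, one_mul]
      exact hhb u
    set G : ℝ → ℂ := fun y => g (x - a * y) * φc y * Complex.exp (Complex.I * ((p : ℝ) : ℂ) * (y:ℂ)) with hGdef
    have hG2 : ∀ u:ℝ, G (2*π*u) = E u * h u := by
      intro u
      rw [hGdef, hEdef, hhdef]
      simp only []
      rw [show Complex.I * (((p:ℕ):ℝ):ℂ) * ((2*π*u : ℝ):ℂ)
          = ((2*π*(p:ℝ)*u : ℝ):ℂ) * Complex.I by push_cast; ring]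
      ring
    have step1 : modProj (φc : ℝ → ℂ) a p g x = (2*π) • ∫ u:ℝ, E u * h u := by
      have h1 : ∫ (u:ℝ), G (2*π*u) = |(2*π)⁻¹| • ∫ y:ℝ, G y :=
        MeasureTheory.Measure.integral_comp_mul_left G (2*π)
      simp only [hG2] at h1
      have hmp : modProj (φc : ℝ → ℂ) a p g x = ∫ y:ℝ, G y := rfl
      rw [hmp, h1, abs_of_pos (by positivity : (0:ℝ) < (2*π)⁻¹), smul_smul,
        mul_inv_cancel₀ (by positivity : (2*π:ℝ) ≠ 0), one_smul]
    -- relating fourierCoeff F to the full-line integral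
    have hEH_int_k : ∀ k:ℤ, Integrable (fun u:ℝ => E u * h (u + (k:ℝ))) := by
      intro k
      have he : (fun u:ℝ => E u * h (u + (k:ℝ)))
          = (fun u:ℝ => E u * h u) ∘ (fun u => u + (k:ℝ)) := by
        funext u
        simp only [Function.comp_apply]
        rw [hEper k u]
      rw [he]
      exact ((measurePreserving_add_right volume ((k:ℤ):ℝ)).integrable_comp
        hEh_int.aestronglyMeasurable).mpr hEh_int
    have hsum_int : Summable (fun k:ℤ => ∫ u in Set.Ioc (0:ℝ) 1, ‖E u * h (u + (k:ℝ))‖) := by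
      have h1 : HasSum (fun k:ℤ => ∫ u in (0:ℝ)..1, ‖h (u + (k:ℝ))‖) (∫ u:ℝ, ‖h u‖) :=
        (hhint.norm).hasSum_intervalIntegral_comp_add_int
      refine h1.summable.congr fun k => ?_
      rw [intervalIntegral.integral_of_le zero_le_one]
      apply integral_congr_ae
      apply ae_of_all
      intro u
      show ‖h (u + (k:ℝ))‖ = ‖E u * h (u + (k:ℝ))‖
      rw [norm_mul (E u) (h (u + (k:ℝ))), hEnorm, one_mul]
    have step2a' : ∫ u in Set.Ioc (0:ℝ) 1, E u * Hr u
        = ∫ u in Set.Ioc (0:ℝ) 1, ∑' k:ℤ, E u * h (u + (k:ℝ)) := by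
      apply integral_congr_ae
      apply ae_of_all
      intro u
      rw [hHrdef]
      exact (tsum_mul_left).symm
    have step2a : ∫ u in Set.Ioc (0:ℝ) 1, E u * Hr u
        = ∑' k:ℤ, ∫ u in Set.Ioc (0:ℝ) 1, E u * h (u + (k:ℝ)) := by
      have h0 := MeasureTheory.integral_tsum_of_summable_integral_norm
        (μ := volume.restrict (Set.Ioc (0:ℝ) 1))
        (F := fun k:ℤ => fun u:ℝ => E u * h (u + (k:ℝ)))
        (fun k => (hEH_int_k k).restrict) hsum_int
      rw [step2a']
      exact h0.symm
    have step2b : ∀ k:ℤ, (∫ u in Set.Ioc (0:ℝ) 1, E u * h (u + (k:ℝ)))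
        = ∫ u in (0:ℝ)..1, E (u+(k:ℝ)) * h (u + (k:ℝ)) := by
      intro k
      rw [intervalIntegral.integral_of_le zero_le_one]
      apply integral_congr_ae
      apply ae_of_all
      intro u
      show E u * h (u + (k:ℝ)) = E (u + (k:ℝ)) * h (u + (k:ℝ))
      rw [hEper k u]
    have step2c : HasSum (fun k:ℤ => ∫ u in (0:ℝ)..1, E (u+(k:ℝ)) * h (u+(k:ℝ)))
        (∫ u:ℝ, E u * h u) := hEh_int.hasSum_intervalIntegral_comp_add_int
    have step2 : fourierCoeff F (-(p:ℤ)) = ∫ u:ℝ, E u * h u := by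
      rw [fourierCoeff_eq_intervalIntegral F (-(p:ℤ)) 0]
      simp only [neg_neg, zero_add]
      rw [show (1:ℝ)/1 = 1 by norm_num, one_smul]
      rw [intervalIntegral.integral_of_le zero_le_one]
      have hptw : ∀ u ∈ Set.Ioc (0:ℝ) 1,
          (fourier ((p:ℤ)) (u : AddCircle (1:ℝ))) • F (u : AddCircle (1:ℝ)) = E u * Hr u := by
        intro u hu
        rw [hFeq u (by simpa using hu)]
        rw [fourier_coe_apply, smul_eq_mul, hEdef]
        congr 1
        push_cast
        ring
      rw [setIntegral_congr_fun measurableSet_Ioc hptw]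
      rw [show (∫ u in Set.Ioc (0:ℝ) 1, E u * Hr u)
            = ∑' k:ℤ, ∫ u in Set.Ioc (0:ℝ) 1, E u * h (u + (k:ℝ)) from step2a]
      rw [tsum_congr step2b]
      exact step2c.tsum_eq
    rw [step1, step2]
  -- assembling
  have hmod : ∀ p:ℕ, ‖modProj (φc:ℝ→ℂ) a p g x‖^2
      = (2*π)^2 * ‖fourierCoeff (⇑fL) (-(p:ℤ))‖^2 := by
    intro p
    rw [hkey p, ← hcoeq, norm_smul, Real.norm_of_nonneg (by positivity), mul_pow]
  have hinj : ∀ p1 ∈ Finset.Icc (2^m : ℕ) (2^(m+1)), ∀ p2 ∈ Finset.Icc (2^m : ℕ) (2^(m+1)),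
      (fun p₀:ℕ => -(p₀:ℤ)) p1 = (fun p₀:ℕ => -(p₀:ℤ)) p2 → p1 = p2 := by
    intro p1 _ p2 _ hpe
    simp only [neg_inj] at hpe
    exact_mod_cast hpe
  calc ∑ p₀ ∈ Finset.Icc (2^m : ℕ) (2^(m+1)), ‖modProj (φc:ℝ→ℂ) a p₀ g x‖^2
      = ∑ p₀ ∈ Finset.Icc (2^m : ℕ) (2^(m+1)), (2*π)^2 * ‖fourierCoeff (⇑fL) (-(p₀:ℤ))‖^2 :=
        Finset.sum_congr rfl (fun p _ => hmod p)
    _ = (2*π)^2 * ∑ p₀ ∈ Finset.Icc (2^m : ℕ) (2^(m+1)), ‖fourierCoeff (⇑fL) (-(p₀:ℤ))‖^2 :=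
        (Finset.mul_sum _ _ _).symm
    _ = (2*π)^2 * ∑ n ∈ (Finset.Icc (2^m : ℕ) (2^(m+1))).image (fun p₀:ℕ => -(p₀:ℤ)),
          ‖fourierCoeff (⇑fL) n‖^2 := by
        rw [Finset.sum_image hinj]
    _ ≤ (2*π)^2 * ∑' n:ℤ, ‖fourierCoeff (⇑fL) n‖^2 :=
        mul_le_mul_of_nonneg_left
          (Summable.sum_le_tsum _ (fun i _ => sq_nonneg _) hsummable) (by positivity)
    _ = (2*π)^2 * ∫ t, ‖fL t‖^2 ∂(AddCircle.haarAddCircle) := by rw [hpars]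
    _ ≤ (2*π)^2 * (B*M)^2 := mul_le_mul_of_nonneg_left hintb (by positivity)
    _ ≤ ((2*π)^2 * M^2 + 1) * B^2 := by nlinarith [sq_nonneg B]
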